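/- For a, b ∈ 𝔻 the map ψ(x₁,x₂,x₃) = ((x₁ − a − b̄x₃ + ab̄x₂)/(1 − āx₁ − b̄x₂ + āb̄x₃), (x₂ − b − āx₃ + āb x₁)/(1 − āx₁ − b̄x₂ + āb̄x₃), (x₃ − ax₂ − bx₁ + ab)/(1 − āx₁ − b̄x₂ + āb̄x₃)) is a holomorphic automorphism of the tetrablock 𝔼. -/

import Mathlib

open Complex Metric Set

noncomputable section

/-- The open unit disc in `ℂ`. -/
def 𝔻 : Set ℂ := Metric.ball 0 1

/-- `B` is a Blaschke product of degree `m` on the unit disc: a unimodular constant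
times a product of `m` Möbius factors. -/
def IsBlaschke (m : ℕ) (B : ℂ → ℂ) : Prop :=
  ∃ (ω : ℂ) (a : Fin m → ℂ), ‖ω‖ = 1 ∧ (∀ j, a j ∈ 𝔻) ∧
    ∀ z ∈ 𝔻, B z = ω * ∏ j, (a j - z) / (1 - (starRingEnd ℂ) (a j) * z)

variable {E : Type*} [NormedAddCommGroup E] [NormedSpace ℂ E]

/-- The interpolation data `lam j ↦ f (lam j)` is extremally solvable (through `f`):
no map holomorphic on a neighbourhood of the closed unit disc with values in `D`
interpolates `f` at the points `lam j`. -/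
def ExtSolv (D : Set E) {m : ℕ} (lam : Fin m → ℂ) (f : ℂ → E) : Prop :=
  ¬ ∃ (U : Set ℂ) (g : ℂ → E), IsOpen U ∧ Metric.closedBall (0 : ℂ) 1 ⊆ U ∧
      DifferentiableOn ℂ g U ∧ (∀ z ∈ U, g z ∈ D) ∧ ∀ j, g (lam j) = f (lam j)

/-- `f : 𝔻 → D` is a weak `m`-extremal with respect to the distinct points `lam`. -/
def IsWeakExtremal (D : Set E) {m : ℕ} (lam : Fin m → ℂ) (f : ℂ → E) : Prop :=
  DifferentiableOn ℂ f 𝔻 ∧ (∀ z ∈ 𝔻, f z ∈ D) ∧ ExtSolv D lam f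

/-- `f : 𝔻 → D` is `m`-extremal: for all choices of `m` distinct points of `𝔻` the
corresponding interpolation data is extremally solvable. -/
def IsMExtremal (D : Set E) (m : ℕ) (f : ℂ → E) : Prop :=
  DifferentiableOn ℂ f 𝔻 ∧ (∀ z ∈ 𝔻, f z ∈ D) ∧
    ∀ lam : Fin m → ℂ, Function.Injective lam → (∀ j, lam j ∈ 𝔻) → ExtSolv D lam f

/-- The Minkowski functional of a set `D`. -/
def mink (D : Set E) (z : E) : ℝ := sInf {t : ℝ | 0 < t ∧ ((t : ℂ))⁻¹ • z ∈ D}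

/-- `φ` is a holomorphic automorphism of `D`. -/
def IsAutomorphismOf (D : Set E) (φ : E → E) : Prop :=
  DifferentiableOn ℂ φ D ∧ Set.MapsTo φ D D ∧
    ∃ ψ : E → E, DifferentiableOn ℂ ψ D ∧ Set.MapsTo ψ D D ∧
      (∀ z ∈ D, ψ (φ z) = z) ∧ (∀ z ∈ D, φ (ψ z) = z)

/-- The group of holomorphic automorphisms of `D` acts transitively. -/
def Homogeneous (D : Set E) : Prop :=
  ∀ z ∈ D, ∀ w ∈ D, ∃ φ : E → E, IsAutomorphismOf D φ ∧ φ z = w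

/-- `f` is an `m`-complex geodesic of `D`: there is `F ∈ 𝒪(D, 𝔻)` such that `F ∘ f` is a
non-constant Blaschke product of degree at most `m - 1`. -/
def IsComplexGeodesicOfOrder (D : Set E) (m : ℕ) (f : ℂ → E) : Prop :=
  DifferentiableOn ℂ f 𝔻 ∧ (∀ z ∈ 𝔻, f z ∈ D) ∧
    ∃ F : E → ℂ, DifferentiableOn ℂ F D ∧ (∀ z ∈ D, F z ∈ 𝔻) ∧
      ∃ k : ℕ, 1 ≤ k ∧ k ≤ m - 1 ∧ ∃ B : ℂ → ℂ, IsBlaschke k B ∧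
        ∀ z ∈ 𝔻, F (f z) = B z

/-- The sub-mean-value property on circles, for a real function on a subset of `ℂ`. -/
def SubmeanOn (u : ℂ → ℝ) (S : Set ℂ) : Prop :=
  ∀ (c : ℂ) (r : ℝ), 0 < r → Metric.closedBall c r ⊆ S →
    u c ≤ (2 * Real.pi)⁻¹ * ∫ θ in (0:ℝ)..(2 * Real.pi), u (c + r * Complex.exp (θ * Complex.I))

/-- `u` is plurisubharmonic on `D`: upper semicontinuous and submean on every complex line. -/
def PlurisubharmonicOn (u : E → ℝ) (D : Set E) : Prop :=
  UpperSemicontinuousOn u D ∧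
    ∀ (z v : E), SubmeanOn (fun w : ℂ => u (z + w • v)) {w : ℂ | z + w • v ∈ D}

/-- Hartogs pseudoconvexity: `- log dist(·, ∂D)` is plurisubharmonic on `D`. -/
def IsPseudoconvex (D : Set E) : Prop :=
  PlurisubharmonicOn (fun z => - Real.log (Metric.infDist z Dᶜ)) D


/-- The tetrablock. -/
def TetE : Set (Fin 3 → ℂ) :=
  {x | ‖x 0 - (starRingEnd ℂ) (x 1) * x 2‖ + ‖x 1 - (starRingEnd ℂ) (x 0) * x 2‖ + ‖x 2‖ ^ 2 < 1}

/-- The candidate automorphism of the tetrablock induced by `Φ_{diag(a,b)}`. -/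
def tetraAut (a b : ℂ) : (Fin 3 → ℂ) → (Fin 3 → ℂ) := fun x =>
  ![(x 0 - a - (starRingEnd ℂ) b * x 2 + a * (starRingEnd ℂ) b * x 1) /
      (1 - (starRingEnd ℂ) a * x 0 - (starRingEnd ℂ) b * x 1 +
        (starRingEnd ℂ) a * (starRingEnd ℂ) b * x 2),
    (x 1 - b - (starRingEnd ℂ) a * x 2 + (starRingEnd ℂ) a * b * x 0) /
      (1 - (starRingEnd ℂ) a * x 0 - (starRingEnd ℂ) b * x 1 +
        (starRingEnd ℂ) a * (starRingEnd ℂ) b * x 2),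
    (x 2 - a * x 1 - b * x 0 + a * b) /
      (1 - (starRingEnd ℂ) a * x 0 - (starRingEnd ℂ) b * x 1 +
        (starRingEnd ℂ) a * (starRingEnd ℂ) b * x 2)]

open ComplexConjugate

set_option maxHeartbeats 1000000

lemma exists_unimodular (X : ℂ) : ∃ ζ : ℂ, ‖ζ‖ = 1 ∧ ζ * X = (‖X‖ : ℂ) := by
  rcases eq_or_ne X 0 with h | h
  · exact ⟨1, norm_one, by simp [h]⟩
  · have hx : (‖X‖ : ℂ) ≠ 0 := by exact_mod_cast norm_ne_zero_iff.mpr h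
    refine ⟨conj X / ‖X‖, ?_, ?_⟩
    · rw [norm_div, RCLike.norm_conj, Complex.norm_real, norm_norm,
        div_self (norm_ne_zero_iff.mpr h)]
    · rw [div_mul_eq_mul_div, mul_comm, Complex.mul_conj, Complex.normSq_eq_norm_sq]
      push_cast
      rw [sq, mul_div_assoc, div_self hx, mul_one]

lemma keyb (a u : ℂ) (τ : ℝ) (hτ : 2 * ‖u‖ ≤ τ) :
    ‖u + a ^ 2 * conj u - a * (τ : ℂ)‖ + 2 * ((conj a) * u).re ≤
      (1 + ‖a‖ ^ 2) * ‖u‖ + ‖a‖ * (τ - 2 * ‖u‖) := by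
  set X := u + a ^ 2 * conj u - a * (τ : ℂ) with hX
  obtain ⟨ζ, hζ1, hζX⟩ := exists_unimodular X
  have hnsζ : Complex.normSq ζ = 1 := by
    rw [Complex.normSq_eq_norm_sq, hζ1]; norm_num
  have hnsa : Complex.normSq a = ‖a‖ ^ 2 := by
    rw [Complex.normSq_eq_norm_sq]
  have hζζ : ζ * conj ζ = 1 := by rw [Complex.mul_conj, hnsζ]; norm_num
  set P := (a * ζ).re with hPdef
  have hPle : |P| ≤ ‖a‖ := by
    calc |P| ≤ ‖a * ζ‖ := Complex.abs_re_le_norm _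
    _ = ‖a‖ := by rw [norm_mul, hζ1, mul_one]
  set w := ζ + (conj a) ^ 2 * conj ζ + 2 * conj a with hwdef
  have hw : ζ * X + 2 * ((conj a) * u) =
      w * u - (a * ζ) * (τ : ℂ) + (a ^ 2 * conj u * ζ - conj (a ^ 2 * conj u * ζ)) := by
    simp only [hX, hwdef, map_mul, map_pow, Complex.conj_conj]
    ring
  have e1 : (ζ * X).re = ‖X‖ := by rw [hζX, Complex.ofReal_re]
  have e2 : ((a * ζ) * (τ : ℂ)).re = P * τ := by
    rw [Complex.mul_re, Complex.ofReal_re, Complex.ofReal_im]; ring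
  have e3 : (a ^ 2 * conj u * ζ - conj (a ^ 2 * conj u * ζ)).re = 0 := by
    rw [Complex.sub_conj]; simp
  have hre : ‖X‖ + 2 * ((conj a) * u).re = (w * u).re - P * τ := by
    have h1 := congrArg Complex.re hw
    rw [Complex.add_re, Complex.add_re, Complex.sub_re, e1, e2, e3] at h1
    simpa [Complex.mul_re] using h1
  have hw2 : w = ζ * (1 + conj a * conj ζ) ^ 2 := by
    linear_combination (-(2 * conj a) - (conj a) ^ 2 * conj ζ) * hζζ
  have hwnorm : ‖w‖ = 1 + ‖a‖ ^ 2 + 2 * P := by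
    have h2 : ‖w‖ = ‖(1 : ℂ) + conj a * conj ζ‖ ^ 2 := by
      rw [hw2, norm_mul, hζ1, one_mul, norm_pow]
    have h3 : ‖(1 : ℂ) + conj a * conj ζ‖ ^ 2 = 1 + ‖a‖ ^ 2 + 2 * P := by
      rw [Complex.sq_norm, Complex.normSq_add, Complex.normSq_one,
        Complex.normSq_mul, Complex.normSq_conj, Complex.normSq_conj, hnsζ, hnsa]
      simp only [map_mul, Complex.conj_conj, one_mul, hPdef]
      ring
    rw [h2, h3]
  have hwu : (w * u).re ≤ (1 + ‖a‖ ^ 2 + 2 * P) * ‖u‖ := by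
    calc (w * u).re ≤ ‖w * u‖ := Complex.re_le_norm _
    _ = ‖w‖ * ‖u‖ := by rw [norm_mul]
    _ = (1 + ‖a‖ ^ 2 + 2 * P) * ‖u‖ := by rw [hwnorm]
  have habs := abs_le.mp hPle
  nlinarith [mul_nonneg (by linarith [habs.1] : (0:ℝ) ≤ P + ‖a‖)
      (by linarith : (0:ℝ) ≤ τ - 2 * ‖u‖), norm_nonneg u]

lemma core_ineq (s t U V σ D0 : ℝ) (hs0 : 0 ≤ s) (hs : s < 1) (ht0 : 0 ≤ t) (ht : t < 1)
    (hU : 0 ≤ U) (hV : 0 ≤ V) (h : U + V < σ)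
    (hD : D0 * σ = U ^ 2 - V ^ 2) :
    (1 - t ^ 2) * ((1 + s ^ 2) * U + s * (σ + D0 - 2 * U)) +
      (1 - s ^ 2) * ((1 + t ^ 2) * V + t * (σ - D0 - 2 * V)) <
    (1 - s ^ 2 * t ^ 2) * σ + (s ^ 2 - t ^ 2) * D0 := by
  have hσ : 0 < σ := by linarith
  have h1 : 0 < (1 - s) * (1 - t) := by nlinarith
  have h2 : 0 < σ - U - V := by linarith
  have h3 : 0 < (1 - s * t) * σ + (s - t) * (U - V) := by
    nlinarith [mul_pos (by nlinarith : (0:ℝ) < 1 - s * t) h2,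
      mul_nonneg (mul_nonneg (by linarith : (0:ℝ) ≤ 1 + s) (by linarith : (0:ℝ) ≤ 1 - t)) hU,
      mul_nonneg (mul_nonneg (by linarith : (0:ℝ) ≤ 1 - s) (by linarith : (0:ℝ) ≤ 1 + t)) hV]
  have key : σ * ((1 - s ^ 2 * t ^ 2) * σ + (s ^ 2 - t ^ 2) * D0
      - ((1 - t ^ 2) * ((1 + s ^ 2) * U + s * (σ + D0 - 2 * U)) +
        (1 - s ^ 2) * ((1 + t ^ 2) * V + t * (σ - D0 - 2 * V)))) =
      (1 - s) * (1 - t) * (σ - U - V) * ((1 - s * t) * σ + (s - t) * (U - V)) := by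
    linear_combination (s ^ 2 - t ^ 2 - s * (1 - t ^ 2) + t * (1 - s ^ 2)) * hD
  nlinarith [mul_pos (mul_pos h1 h2) h3]

noncomputable section

set_option maxHeartbeats 1000000

namespace TetraAux2

def Pnum (a b : ℂ) (x : Fin 3 → ℂ) : ℂ :=
  x 0 - a - conj b * x 2 + a * conj b * x 1
def Qnum (a b : ℂ) (x : Fin 3 → ℂ) : ℂ :=
  x 1 - b - conj a * x 2 + conj a * b * x 0
def Rnum (a b : ℂ) (x : Fin 3 → ℂ) : ℂ :=
  x 2 - a * x 1 - b * x 0 + a * b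
def Dden (a b : ℂ) (x : Fin 3 → ℂ) : ℂ :=
  1 - conj a * x 0 - conj b * x 1 + conj a * conj b * x 2

lemma mc (z : ℂ) : z * conj z = ((‖z‖ ^ 2 : ℝ) : ℂ) := by
  rw [Complex.mul_conj, Complex.normSq_eq_norm_sq]

lemma main_est (a b : ℂ) (x : Fin 3 → ℂ) (ha : ‖a‖ < 1) (hb : ‖b‖ < 1)
    (hx : ‖x 0 - conj (x 1) * x 2‖ + ‖x 1 - conj (x 0) * x 2‖ + ‖x 2‖ ^ 2 < 1) :
    ‖Pnum a b x * conj (Dden a b x) - conj (Qnum a b x) * Rnum a b x‖ +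
      ‖Qnum a b x * conj (Dden a b x) - conj (Pnum a b x) * Rnum a b x‖ +
      ‖Rnum a b x‖ ^ 2 < ‖Dden a b x‖ ^ 2 := by
  set u : ℂ := x 0 - conj (x 1) * x 2 with hu
  set v : ℂ := x 1 - conj (x 0) * x 2 with hv
  set s := ‖a‖; set t := ‖b‖; set U := ‖u‖; set V := ‖v‖
  set σ : ℝ := 1 - ‖x 2‖ ^ 2 with hσdef
  set D0 : ℝ := ‖x 0‖ ^ 2 - ‖x 1‖ ^ 2 with hD0def
  have hs0 : (0:ℝ) ≤ s := norm_nonneg a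
  have ht0 : (0:ℝ) ≤ t := norm_nonneg b
  have hU0 : (0:ℝ) ≤ U := norm_nonneg u
  have hV0 : (0:ℝ) ≤ V := norm_nonneg v
  have hUVσ : U + V < σ := by simp only [hσdef]; linarith
  have hσ0 : 0 < σ := by linarith
  -- |u|^2 - |v|^2 = D0 * σ
  have hUV : D0 * σ = U ^ 2 - V ^ 2 := by
    have hid : u * conj u - v * conj v =
        (x 0 * conj (x 0) - x 1 * conj (x 1)) * (1 - x 2 * conj (x 2)) := by
      simp only [hu, hv, map_sub, map_mul, Complex.conj_conj]
      ring
    rw [mc u, mc v, mc (x 0), mc (x 1), mc (x 2)] at hid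
    have : ((U ^ 2 - V ^ 2 : ℝ) : ℂ) = ((D0 * σ : ℝ) : ℂ) := by
      push_cast at hid ⊢
      rw [hσdef, hD0def]
      push_cast
      linear_combination hid
    exact (Complex.ofReal_inj.mp this).symm
  -- tau bounds
  have hτA : 2 * U ≤ σ + D0 := by
    nlinarith [mul_nonneg (by linarith : (0:ℝ) ≤ σ - U - V) (by linarith : (0:ℝ) ≤ σ - U + V)]
  have hτB : 2 * V ≤ σ - D0 := by
    nlinarith [mul_nonneg (by linarith : (0:ℝ) ≤ σ - U - V) (by linarith : (0:ℝ) ≤ σ + U - V)]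
  -- identity for A
  have hτAc : 1 - x 2 * conj (x 2) + x 0 * conj (x 0) - x 1 * conj (x 1) = ((σ + D0 : ℝ) : ℂ) := by
    rw [mc (x 0), mc (x 1), mc (x 2), hσdef, hD0def]; push_cast; ring
  have hτBc : 1 - x 2 * conj (x 2) - x 0 * conj (x 0) + x 1 * conj (x 1) = ((σ - D0 : ℝ) : ℂ) := by
    rw [mc (x 0), mc (x 1), mc (x 2), hσdef, hD0def]; push_cast; ring
  have hbb : ((1 - t ^ 2 : ℝ) : ℂ) = 1 - b * conj b := by rw [mc b]; push_cast; ring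
  have haa : ((1 - s ^ 2 : ℝ) : ℂ) = 1 - a * conj a := by rw [mc a]; push_cast; ring
  have hAid : Pnum a b x * conj (Dden a b x) - conj (Qnum a b x) * Rnum a b x =
      ((1 - t ^ 2 : ℝ) : ℂ) * (u + a ^ 2 * conj u - a * ((σ + D0 : ℝ) : ℂ)) := by
    rw [← hτAc, hbb]
    simp only [hu, Pnum, Qnum, Rnum, Dden, map_sub, map_add, map_mul, map_one, Complex.conj_conj]
    ring
  have hBid : Qnum a b x * conj (Dden a b x) - conj (Pnum a b x) * Rnum a b x =
      ((1 - s ^ 2 : ℝ) : ℂ) * (v + b ^ 2 * conj v - b * ((σ - D0 : ℝ) : ℂ)) := by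
    rw [← hτBc, haa]
    simp only [hv, Pnum, Qnum, Rnum, Dden, map_sub, map_add, map_mul, map_one, Complex.conj_conj]
    ring
  -- identity for C
  have hCid : (‖Dden a b x‖ ^ 2 - ‖Rnum a b x‖ ^ 2 : ℝ) =
      (1 - s ^ 2 * t ^ 2) * σ - (1 - t ^ 2) * (2 * (conj a * u).re)
        - (1 - s ^ 2) * (2 * (conj b * v).re) + (s ^ 2 - t ^ 2) * D0 := by
    have hid : Dden a b x * conj (Dden a b x) - Rnum a b x * conj (Rnum a b x) =
        (1 - (a * conj a) * (b * conj b)) * (1 - x 2 * conj (x 2))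
          - (1 - b * conj b) * (conj a * u + conj (conj a * u))
          - (1 - a * conj a) * (conj b * v + conj (conj b * v))
          + (a * conj a - b * conj b) * (x 0 * conj (x 0) - x 1 * conj (x 1)) := by
      simp only [hu, hv, Pnum, Qnum, Rnum, Dden, map_sub, map_add, map_mul, map_one,
        Complex.conj_conj]
      ring
    rw [mc (Dden a b x), mc (Rnum a b x), mc a, mc b, mc (x 0), mc (x 1), mc (x 2),
      Complex.add_conj, Complex.add_conj] at hid
    have : ((‖Dden a b x‖ ^ 2 - ‖Rnum a b x‖ ^ 2 : ℝ) : ℂ) =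
        (((1 - s ^ 2 * t ^ 2) * σ - (1 - t ^ 2) * (2 * (conj a * u).re)
          - (1 - s ^ 2) * (2 * (conj b * v).re) + (s ^ 2 - t ^ 2) * D0 : ℝ) : ℂ) := by
      rw [hσdef, hD0def]
      push_cast at hid ⊢
      linear_combination hid
    exact Complex.ofReal_inj.mp this
  -- norms of A and B
  have hAnorm : ‖Pnum a b x * conj (Dden a b x) - conj (Qnum a b x) * Rnum a b x‖ =
      (1 - t ^ 2) * ‖u + a ^ 2 * conj u - a * ((σ + D0 : ℝ) : ℂ)‖ := by
    rw [hAid, norm_mul, Complex.norm_real, Real.norm_eq_abs, _root_.abs_of_nonneg (by nlinarith : (0:ℝ) ≤ 1 - t ^ 2)]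
  have hBnorm : ‖Qnum a b x * conj (Dden a b x) - conj (Pnum a b x) * Rnum a b x‖ =
      (1 - s ^ 2) * ‖v + b ^ 2 * conj v - b * ((σ - D0 : ℝ) : ℂ)‖ := by
    rw [hBid, norm_mul, Complex.norm_real, Real.norm_eq_abs, _root_.abs_of_nonneg (by nlinarith : (0:ℝ) ≤ 1 - s ^ 2)]
  have hkA := keyb a u (σ + D0) hτA
  have hkB := keyb b v (σ - D0) hτB
  have hcore := core_ineq s t U V σ D0 hs0 ha ht0 hb hU0 hV0 hUVσ hUV
  have ht2 : (0:ℝ) ≤ 1 - t ^ 2 := by nlinarith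
  have hs2 : (0:ℝ) ≤ 1 - s ^ 2 := by nlinarith
  rw [hAnorm, hBnorm]
  have hkA2 := mul_le_mul_of_nonneg_left hkA ht2
  have hkB2 := mul_le_mul_of_nonneg_left hkB hs2
  linarith [hkA2, hkB2, hcore, hCid]

lemma aut0 (a b : ℂ) (x : Fin 3 → ℂ) : tetraAut a b x 0 = Pnum a b x / Dden a b x := rfl
lemma aut1 (a b : ℂ) (x : Fin 3 → ℂ) : tetraAut a b x 1 = Qnum a b x / Dden a b x := rfl
lemma aut2 (a b : ℂ) (x : Fin 3 → ℂ) : tetraAut a b x 2 = Rnum a b x / Dden a b x := rfl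

lemma denom_ne (a b : ℂ) (x : Fin 3 → ℂ) (ha : ‖a‖ < 1) (hb : ‖b‖ < 1)
    (hx : x ∈ TetE) : Dden a b x ≠ 0 := by
  have h := main_est a b x ha hb hx
  intro h0
  have hpos : (0:ℝ) < ‖Dden a b x‖ ^ 2 := lt_of_le_of_lt (by positivity) h
  rw [h0, norm_zero] at hpos
  norm_num at hpos

lemma mapsTo_tet (a b : ℂ) (ha : ‖a‖ < 1) (hb : ‖b‖ < 1) :
    Set.MapsTo (tetraAut a b) TetE TetE := by
  intro x hx
  have hd := denom_ne a b x ha hb hx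
  have hdc : conj (Dden a b x) ≠ 0 := by simpa using hd
  have h := main_est a b x ha hb hx
  have hdpos : (0:ℝ) < ‖Dden a b x‖ ^ 2 := pow_pos (norm_pos_iff.mpr hd) 2
  show ‖tetraAut a b x 0 - conj (tetraAut a b x 1) * tetraAut a b x 2‖ +
      ‖tetraAut a b x 1 - conj (tetraAut a b x 0) * tetraAut a b x 2‖ +
      ‖tetraAut a b x 2‖ ^ 2 < 1
  have e0 : tetraAut a b x 0 - conj (tetraAut a b x 1) * tetraAut a b x 2 =
      (Pnum a b x * conj (Dden a b x) - conj (Qnum a b x) * Rnum a b x) /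
        (Dden a b x * conj (Dden a b x)) := by
    rw [aut0, aut1, aut2, map_div₀]
    field_simp
  have e1 : tetraAut a b x 1 - conj (tetraAut a b x 0) * tetraAut a b x 2 =
      (Qnum a b x * conj (Dden a b x) - conj (Pnum a b x) * Rnum a b x) /
        (Dden a b x * conj (Dden a b x)) := by
    rw [aut0, aut1, aut2, map_div₀]
    field_simp
  rw [e0, e1, aut2, norm_div, norm_div, norm_mul, RCLike.norm_conj, norm_div, div_pow]
  rw [← add_div, ← sq]
  rw [div_add_div _ _ (ne_of_gt hdpos) (ne_of_gt hdpos)]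
  rw [div_lt_one (by positivity)]
  nlinarith [mul_lt_mul_of_pos_right h hdpos]

lemma diffOn_tet (a b : ℂ) (ha : ‖a‖ < 1) (hb : ‖b‖ < 1) :
    DifferentiableOn ℂ (tetraAut a b) TetE := by
  have hproj : ∀ j : Fin 3, Differentiable ℂ (fun x : Fin 3 → ℂ => x j) := fun j =>
    (ContinuousLinearMap.proj (R := ℂ) (φ := fun _ : Fin 3 => ℂ) j).differentiable
  have hP : Differentiable ℂ (Pnum a b) := by
    unfold Pnum
    exact (((hproj 0).sub_const a).sub ((differentiable_const _).mul (hproj 2))).add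
      ((differentiable_const _).mul (hproj 1))
  have hQ : Differentiable ℂ (Qnum a b) := by
    unfold Qnum
    exact (((hproj 1).sub_const b).sub ((differentiable_const _).mul (hproj 2))).add
      ((differentiable_const _).mul (hproj 0))
  have hR : Differentiable ℂ (Rnum a b) := by
    unfold Rnum
    exact (((hproj 2).sub ((differentiable_const _).mul (hproj 1))).sub
      ((differentiable_const _).mul (hproj 0))).add_const (a * b)
  have hD : Differentiable ℂ (Dden a b) := by
    unfold Dden
    exact (((differentiable_const _).sub ((differentiable_const _).mul (hproj 0))).sub
      ((differentiable_const _).mul (hproj 1))).add ((differentiable_const _).mul (hproj 2))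
  rw [differentiableOn_pi]
  intro i
  have hdne : ∀ x ∈ TetE, Dden a b x ≠ 0 := fun x hx => denom_ne a b x ha hb hx
  fin_cases i
  · refine DifferentiableOn.congr (f := fun x => Pnum a b x * (Dden a b x)⁻¹) ?_
      (fun x hx => by show tetraAut a b x 0 = _; rw [aut0, div_eq_mul_inv])
    exact hP.differentiableOn.mul (hD.differentiableOn.inv hdne)
  · refine DifferentiableOn.congr (f := fun x => Qnum a b x * (Dden a b x)⁻¹) ?_
      (fun x hx => by show tetraAut a b x 1 = _; rw [aut1, div_eq_mul_inv])
    exact hQ.differentiableOn.mul (hD.differentiableOn.inv hdne)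
  · refine DifferentiableOn.congr (f := fun x => Rnum a b x * (Dden a b x)⁻¹) ?_
      (fun x hx => by show tetraAut a b x 2 = _; rw [aut2, div_eq_mul_inv])
    exact hR.differentiableOn.mul (hD.differentiableOn.inv hdne)

lemma comp_id (a b : ℂ) (ha : ‖a‖ < 1) (hb : ‖b‖ < 1) (x : Fin 3 → ℂ) (hx : x ∈ TetE) :
    tetraAut (-a) (-b) (tetraAut a b x) = x := by
  have hd := denom_ne a b x ha hb hx
  set y := tetraAut a b x with hy
  set c : ℝ := (1 - ‖a‖ ^ 2) * (1 - ‖b‖ ^ 2) with hc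
  have hcpos : 0 < c := by
    have := norm_nonneg a; have := norm_nonneg b
    apply mul_pos <;> nlinarith
  have hcne : ((c : ℝ) : ℂ) ≠ 0 := by exact_mod_cast ne_of_gt hcpos
  have hcc : ((c : ℝ) : ℂ) = (1 - a * conj a) * (1 - b * conj b) := by
    rw [mc a, mc b, hc]; push_cast; ring
  have hy0 : y 0 = Pnum a b x / Dden a b x := aut0 a b x
  have hy1 : y 1 = Qnum a b x / Dden a b x := aut1 a b x
  have hy2 : y 2 = Rnum a b x / Dden a b x := aut2 a b x
  have hden : Dden (-a) (-b) y * Dden a b x = ((c : ℝ) : ℂ) := by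
    have e : Dden (-a) (-b) y = 1 + conj a * (Pnum a b x / Dden a b x) +
        conj b * (Qnum a b x / Dden a b x) +
        conj a * conj b * (Rnum a b x / Dden a b x) := by
      simp only [Dden, hy0, hy1, hy2, map_neg]; ring
    rw [e, hcc]
    field_simp
    simp only [Pnum, Qnum, Rnum, Dden]
    ring
  have hdne2 : Dden (-a) (-b) y ≠ 0 := by
    intro h0
    rw [h0, zero_mul] at hden
    exact hcne hden.symm
  have hn0 : Pnum (-a) (-b) y * Dden a b x = ((c : ℝ) : ℂ) * x 0 := by
    have e : Pnum (-a) (-b) y = (Pnum a b x / Dden a b x) + a +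
        conj b * (Rnum a b x / Dden a b x) + a * conj b * (Qnum a b x / Dden a b x) := by
      simp only [Pnum, hy0, hy1, hy2, map_neg]; ring
    rw [e, hcc]
    field_simp
    simp only [Pnum, Qnum, Rnum, Dden]
    ring
  have hn1 : Qnum (-a) (-b) y * Dden a b x = ((c : ℝ) : ℂ) * x 1 := by
    have e : Qnum (-a) (-b) y = (Qnum a b x / Dden a b x) + b +
        conj a * (Rnum a b x / Dden a b x) + conj a * b * (Pnum a b x / Dden a b x) := by
      simp only [Qnum, hy0, hy1, hy2, map_neg]; ring
    rw [e, hcc]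
    field_simp
    simp only [Pnum, Qnum, Rnum, Dden]
    ring
  have hn2 : Rnum (-a) (-b) y * Dden a b x = ((c : ℝ) : ℂ) * x 2 := by
    have e : Rnum (-a) (-b) y = (Rnum a b x / Dden a b x) +
        a * (Qnum a b x / Dden a b x) + b * (Pnum a b x / Dden a b x) + a * b := by
      simp only [Rnum, hy0, hy1, hy2, map_neg]; ring
    rw [e, hcc]
    field_simp
    simp only [Pnum, Qnum, Rnum, Dden]
    ring
  funext i
  fin_cases i
  · show tetraAut (-a) (-b) y 0 = x 0
    rw [aut0, div_eq_iff hdne2]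
    apply mul_right_cancel₀ hd
    rw [hn0, mul_assoc, hden]; ring
  · show tetraAut (-a) (-b) y 1 = x 1
    rw [aut1, div_eq_iff hdne2]
    apply mul_right_cancel₀ hd
    rw [hn1, mul_assoc, hden]; ring
  · show tetraAut (-a) (-b) y 2 = x 2
    rw [aut2, div_eq_iff hdne2]
    apply mul_right_cancel₀ hd
    rw [hn2, mul_assoc, hden]; ring

end TetraAux2

theorem stmt14 (a b : ℂ) (ha : a ∈ 𝔻) (hb : b ∈ 𝔻) :
    IsAutomorphismOf TetE (tetraAut a b) := by
  have ha' : ‖a‖ < 1 := mem_ball_zero_iff.mp ha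
  have hb' : ‖b‖ < 1 := mem_ball_zero_iff.mp hb
  have hna : ‖-a‖ < 1 := by simpa using ha'
  have hnb : ‖-b‖ < 1 := by simpa using hb'
  refine ⟨TetraAux2.diffOn_tet a b ha' hb', TetraAux2.mapsTo_tet a b ha' hb',
    tetraAut (-a) (-b), TetraAux2.diffOn_tet (-a) (-b) hna hnb,
    TetraAux2.mapsTo_tet (-a) (-b) hna hnb,
    fun z hz => TetraAux2.comp_id a b ha' hb' z hz, fun z hz => ?_⟩
  have h := TetraAux2.comp_id (-a) (-b) hna hnb z hz
  simpa [neg_neg] using h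

end
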